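/- Let X be a real normed vector space with closed unit ball D_X and K ⊆ X a closed, convex, pointed cone. Suppose A, B, C ⊆ X are nonempty, K-sequentially compact, K-convex sets, and that D_X is K-closed. Then: (i) if A + C + K = C + B + K, then A + K = B + K; (ii) e(A + K, B + K) = e(A + C + K, B + C + K). -/

import Mathlib

open Set Filter Topology Metric Pointwise
open scoped ENNReal

/-- `S` is `K`-sequentially compact: for every sequence in `S` there is a sequence in `K`
such that the difference has a subsequence converging in norm to an element of `S`. -/
def KSeqCompact {X : Type*} [NormedAddCommGroup X] (K S : Set X) : Prop :=
  ∀ a : ℕ → X, (∀ n, a n ∈ S) → ∃ c : ℕ → X, (∀ n, c n ∈ K) ∧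
    ∃ φ : ℕ → ℕ, StrictMono φ ∧ ∃ l ∈ S, Tendsto (fun n => a (φ n) - c (φ n)) atTop (𝓝 l)

/-- The excess `e(A, B) = sup_{x ∈ A} d(x, B)`, valued in `[0, ∞]`. -/
noncomputable def excess {Y : Type*} [SeminormedAddCommGroup Y] (A B : Set Y) : ℝ≥0∞ :=
  ⨆ x ∈ A, EMetric.infEdist x B

-- Lemma 1: S K-seq-compact, T closed with T + K ⊆ T ⇒ S + T closed.
lemma kseq_add_closed {X : Type*} [NormedAddCommGroup X] (K S T : Set X)
    (hT : IsClosed T) (hTK : T + K ⊆ T)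
    (hScomp : KSeqCompact K S) :
    IsClosed (S + T) := by
  apply IsSeqClosed.isClosed
  intro x p hx hxp
  have hmem : ∀ n, ∃ s ∈ S, ∃ t ∈ T, s + t = x n := fun n => Set.mem_add.mp (hx n)
  choose s hs t ht hst using hmem
  obtain ⟨c, hc, φ, hφ, l, hl, hconv⟩ := hScomp s hs
  have hxφ : Tendsto (fun n => x (φ n)) atTop (𝓝 p) := hxp.comp hφ.tendsto_atTop
  have key : Tendsto (fun n => t (φ n) + c (φ n)) atTop (𝓝 (p - l)) := by
    have : (fun n => t (φ n) + c (φ n)) = fun n => x (φ n) - (s (φ n) - c (φ n)) := by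
      funext n; rw [← hst (φ n)]; abel
    rw [this]
    exact hxφ.sub hconv
  have hpl : p - l ∈ T := hT.mem_of_tendsto key
    (Eventually.of_forall fun n => hTK (Set.add_mem_add (ht (φ n)) (hc (φ n))))
  exact ⟨l, hl, p - l, hpl, by show l + (p - l) = p; abel⟩

-- Lemma 2: order cancellation.
lemma cancel_aux {X : Type*} [NormedAddCommGroup X] [NormedSpace ℝ X]
    (K A C S : Set X) (hK0 : (0:X) ∈ K) (hK_add : K + K ⊆ K)
    (hK_cone : ∀ t : ℝ, 0 ≤ t → ∀ x ∈ K, t • x ∈ K)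
    (hC : C.Nonempty) (hCcomp : KSeqCompact K C)
    (hS_closed : IsClosed (S + K)) (hS_conv : Convex ℝ (S + K))
    (h : ∀ a ∈ A, ∀ c ∈ C, a + c ∈ C + (S + K)) :
    A ⊆ S + K := by
  have hSKK : (S + K) + K ⊆ S + K := by
    rw [add_assoc]; exact Set.add_subset_add_left hK_add
  intro a ha
  obtain ⟨c₀, hc₀⟩ := hC
  -- choice function
  have key : ∀ c : {x // x ∈ C}, ∃ q : {x // x ∈ C} × X,
      q.2 ∈ S + K ∧ a + (c : X) = (q.1 : X) + q.2 := by
    intro c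
    obtain ⟨c', hc', w, hw, hcw⟩ := Set.mem_add.mp (h a ha c c.2)
    exact ⟨(⟨c', hc'⟩, w), hw, hcw.symm⟩
  choose F hF1 hF2 using key
  set G : {x // x ∈ C} → {x // x ∈ C} := fun c => (F c).1 with hG
  set cs : ℕ → {x // x ∈ C} := fun n => G^[n] ⟨c₀, hc₀⟩ with hcs
  set w : ℕ → X := fun n => (F (cs n)).2 with hw
  have hstep : ∀ n, a + (cs n : X) = (cs (n+1) : X) + w n := by
    intro n
    have : cs (n+1) = G (cs n) := by
      simp [hcs, Function.iterate_succ_apply']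
    rw [this]; exact hF2 (cs n)
  have hwmem : ∀ n, w n ∈ S + K := fun n => hF1 (cs n)
  have hsum : ∀ n : ℕ, (n : ℝ) • a + c₀ = (cs n : X) + ∑ i ∈ Finset.range n, w i := by
    intro n
    induction n with
    | zero => simp [hcs]
    | succ n ih =>
      have : ((n:ℝ)+1) • a + c₀ = a + ((n:ℝ) • a + c₀) := by
        rw [add_smul, one_smul]; abel
      rw [Nat.cast_succ, this, ih, ← add_assoc, hstep n,
        Finset.sum_range_succ]
      abel
  -- average membership
  have havg : ∀ n : ℕ, 0 < n → a - ((n:ℝ))⁻¹ • ((cs n : X) - c₀) ∈ S + K := by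
    intro n hn
    have hnR : (0:ℝ) < n := by exact_mod_cast hn
    have h1 : a - ((n:ℝ))⁻¹ • ((cs n : X) - c₀)
        = ∑ i ∈ Finset.range n, ((n:ℝ))⁻¹ • w i := by
      rw [← Finset.smul_sum]
      have := hsum n
      have h2 : ∑ i ∈ Finset.range n, w i = (n : ℝ) • a + c₀ - (cs n : X) := by
        rw [this]; abel
      rw [h2]
      match_scalars <;> field_simp
    rw [h1]
    exact hS_conv.sum_mem (fun i _ => by positivity)
      (by simp [Finset.sum_const, hnR.ne']) (fun i _ => hwmem i)
  -- apply K-seq-compactness of C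
  obtain ⟨d, hd, φ, hφ, l, hl, hconv⟩ := hCcomp (fun n => (cs n : X)) (fun n => (cs n).2)
  set ψ : ℕ → ℕ := fun n => φ (n + 1) with hψ
  have hψpos : ∀ n : ℕ, 0 < ψ n := fun n => lt_of_lt_of_le (Nat.succ_pos n) (hφ.le_apply)
  have hψge : ∀ n : ℕ, (n : ℝ) ≤ (ψ n : ℝ) := by
    intro n
    exact_mod_cast le_trans (Nat.le_succ n) hφ.le_apply
  set x : ℕ → X := fun n =>
    a - ((ψ n : ℝ))⁻¹ • ((cs (ψ n) : X) - d (ψ n) - c₀) with hx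
  have hxmem : ∀ n, x n ∈ S + K := by
    intro n
    have h1 : x n = (a - ((ψ n : ℝ))⁻¹ • ((cs (ψ n) : X) - c₀))
        + ((ψ n : ℝ))⁻¹ • d (ψ n) := by
      rw [hx]; simp only [smul_sub]; abel
    rw [h1]
    exact hSKK (Set.add_mem_add (havg (ψ n) (hψpos n))
      (hK_cone _ (by positivity) _ (hd (ψ n))))
  have hxlim : Tendsto x atTop (𝓝 a) := by
    have hinv : Tendsto (fun n => ((ψ n : ℝ))⁻¹) atTop (𝓝 0) := by
      apply Tendsto.inv_tendsto_atTop
      exact tendsto_atTop_mono hψge tendsto_natCast_atTop_atTop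
    have hvec : Tendsto (fun n => (cs (ψ n) : X) - d (ψ n) - c₀) atTop (𝓝 (l - c₀)) := by
      have : Tendsto (fun n => (cs (ψ n) : X) - d (ψ n)) atTop (𝓝 l) :=
        hconv.comp (tendsto_add_atTop_nat 1)
      exact this.sub tendsto_const_nhds
    have : Tendsto (fun n => ((ψ n : ℝ))⁻¹ • ((cs (ψ n) : X) - d (ψ n) - c₀))
        atTop (𝓝 0) := by
      have := hinv.smul hvec
      rwa [zero_smul] at this
    have h2 := (tendsto_const_nhds (x := a) (f := atTop)).sub this
    rwa [sub_zero] at h2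
  exact hS_closed.mem_of_tendsto hxlim (Eventually.of_forall hxmem)

/-- Cancellation and excess invariance for `K`-sequentially compact, `K`-convex sets
(Corollary 27). -/
theorem cancellation_and_excess_K_seq_compact {X : Type*} [NormedAddCommGroup X]
    [NormedSpace ℝ X] (K A B C : Set X)
    (hK_closed : IsClosed K) (hK_conv : Convex ℝ K)
    (hK_cone : ∀ t : ℝ, 0 ≤ t → ∀ x ∈ K, t • x ∈ K)
    (hK_add : K + K ⊆ K) (hK_pointed : K ∩ (-K) = {0})
    (hA : A.Nonempty) (hB : B.Nonempty) (hC : C.Nonempty)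
    (hAcomp : KSeqCompact K A) (hBcomp : KSeqCompact K B) (hCcomp : KSeqCompact K C)
    (hAconv : Convex ℝ (A + K)) (hBconv : Convex ℝ (B + K)) (hCconv : Convex ℝ (C + K))
    (hDX : IsClosed (Metric.closedBall (0 : X) 1 + K)) :
    (A + C + K = C + B + K → A + K = B + K) ∧
    excess (A + K) (B + K) = excess (A + C + K) (B + C + K) := by
  have hK0 : (0:X) ∈ K := by
    have : (0:X) ∈ K ∩ (-K) := by rw [hK_pointed]; rfl
    exact this.1
  have hAKcl : IsClosed (A + K) := kseq_add_closed K A K hK_closed hK_add hAcomp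
  have hBKcl : IsClosed (B + K) := kseq_add_closed K B K hK_closed hK_add hBcomp
  have hBKK : B + K + K ⊆ B + K := by
    rw [add_assoc]; exact Set.add_subset_add_left hK_add
  have hAKK : A + K + K ⊆ A + K := by
    rw [add_assoc]; exact Set.add_subset_add_left hK_add
  constructor
  · -- Part (i)
    intro heq
    have h1 : A ⊆ B + K := by
      apply cancel_aux K A C B hK0 hK_add hK_cone hC hCcomp hBKcl hBconv
      intro a ha c hc
      have hx : a + c + 0 ∈ A + C + K :=
        Set.add_mem_add (Set.add_mem_add ha hc) hK0
      rw [heq, add_assoc] at hx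
      rwa [add_zero] at hx
    have h2 : B ⊆ A + K := by
      apply cancel_aux K B C A hK0 hK_add hK_cone hC hCcomp hAKcl hAconv
      intro b hb c hc
      have hx : c + b + 0 ∈ C + B + K :=
        Set.add_mem_add (Set.add_mem_add hc hb) hK0
      rw [← heq, add_comm A C, add_assoc] at hx
      have : b + c = c + b + 0 := by abel
      rwa [this]
    apply le_antisymm
    · exact (Set.add_subset_add_right h1).trans hBKK
    · exact (Set.add_subset_add_right h2).trans hAKK
  · -- Part (ii)
    -- easy direction
    have easy : excess (A + C + K) (B + C + K) ≤ excess (A + K) (B + K) := by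
      rw [excess, excess]
      apply iSup₂_le
      rintro x ⟨y, ⟨a, ha, c, hc, rfl⟩, k, hk, rfl⟩
      have hiso : Isometry (fun u : X => u + c) :=
        Isometry.of_dist_eq fun u v => dist_add_right u v c
      have hsub : (fun u : X => u + c) '' (B + K) ⊆ B + C + K := by
        rintro _ ⟨_, ⟨b, hb, k', hk', rfl⟩, rfl⟩
        exact ⟨b + c, Set.add_mem_add hb hc, k', hk', add_right_comm b c k'⟩
      calc EMetric.infEdist (a + c + k) (B + C + K)
          ≤ EMetric.infEdist (a + c + k) ((fun u : X => u + c) '' (B + K)) :=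
            EMetric.infEdist_anti hsub
        _ = EMetric.infEdist (a + k) (B + K) := by
            have : a + c + k = (fun u : X => u + c) (a + k) := by simp; abel
            rw [this]; exact EMetric.infEdist_image hiso
        _ ≤ ⨆ x ∈ A + K, EMetric.infEdist x (B + K) :=
            le_iSup₂ (f := fun x _ => EMetric.infEdist x (B + K)) (a + k)
              ⟨a, ha, k, hk, rfl⟩
    -- hard direction
    have hard : excess (A + K) (B + K) ≤ excess (A + C + K) (B + C + K) := by
      set r := excess (A + C + K) (B + C + K) with hr
      apply ENNReal.le_of_forall_pos_le_add
      intro ε hε hrtop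
      set ρ : ℝ := r.toReal + ε with hρ
      have hρpos : (0:ℝ) < ρ := by positivity
      have hT : IsClosed (closedBall (0:X) ρ + K) := by
        have hsmul : ρ • (closedBall (0:X) 1 + K) = closedBall (0:X) ρ + K := by
          ext x
          constructor
          · rintro ⟨y, ⟨d, hd, k, hk, rfl⟩, rfl⟩
            refine ⟨ρ • d, ?_, ρ • k, hK_cone ρ hρpos.le k hk, (smul_add ρ d k).symm⟩
            rw [mem_closedBall_zero_iff] at hd ⊢
            rw [norm_smul, Real.norm_eq_abs, abs_of_pos hρpos]
            calc ρ * ‖d‖ ≤ ρ * 1 := by nlinarith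
              _ = ρ := mul_one ρ
          · rintro ⟨u, hu, k, hk, rfl⟩
            refine ⟨ρ⁻¹ • u + ρ⁻¹ • k, ⟨ρ⁻¹ • u, ?_, ρ⁻¹ • k,
              hK_cone ρ⁻¹ (by positivity) k hk, rfl⟩, ?_⟩
            · rw [mem_closedBall_zero_iff] at hu ⊢
              rw [norm_smul, Real.norm_eq_abs, abs_of_pos (by positivity : (0:ℝ) < ρ⁻¹)]
              calc ρ⁻¹ * ‖u‖ ≤ ρ⁻¹ * ρ := by
                    apply mul_le_mul_of_nonneg_left hu (by positivity)
                _ = 1 := inv_mul_cancel₀ hρpos.ne'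
            · show ρ • (ρ⁻¹ • u + ρ⁻¹ • k) = u + k
              rw [smul_add, smul_inv_smul₀ hρpos.ne', smul_inv_smul₀ hρpos.ne']
        rw [← hsmul]
        exact hDX.smul_of_ne_zero hρpos.ne'
      have hTK : (closedBall (0:X) ρ + K) + K ⊆ closedBall (0:X) ρ + K := by
        rw [add_assoc]; exact Set.add_subset_add_left hK_add
      set S : Set X := B + closedBall (0:X) ρ with hS
      have hS_closed : IsClosed (S + K) := by
        rw [hS, add_assoc]
        exact kseq_add_closed K B _ hT hTK hBcomp
      have hS_conv : Convex ℝ (S + K) := by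
        have : S + K = (B + K) + closedBall (0:X) ρ := by
          rw [hS, add_right_comm]
        rw [this]
        exact hBconv.add (convex_closedBall _ _)
      have hrlt : r < ENNReal.ofReal ρ := by
        have h1 : ENNReal.ofReal ρ = r + ε := by
          rw [hρ, ENNReal.ofReal_add ENNReal.toReal_nonneg ε.coe_nonneg,
            ENNReal.ofReal_toReal hrtop.ne, ENNReal.ofReal_coe_nnreal]
        rw [h1]
        exact ENNReal.lt_add_right hrtop.ne (by exact_mod_cast hε.ne')
      have hA_sub : A ⊆ S + K := by
        apply cancel_aux K A C S hK0 hK_add hK_cone hC hCcomp hS_closed hS_conv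
        intro a ha c hc
        have hx : a + c + 0 ∈ A + C + K :=
          Set.add_mem_add (Set.add_mem_add ha hc) hK0
        rw [add_zero] at hx
        have hinf : EMetric.infEdist (a + c) (B + C + K) ≤ r := by
          rw [hr, excess]
          exact le_iSup₂ (f := fun x _ => EMetric.infEdist x (B + C + K)) (a + c) hx
        obtain ⟨y, hy, hylt⟩ := EMetric.infEdist_lt_iff.mp (lt_of_le_of_lt hinf hrlt)
        obtain ⟨z, ⟨b, hb, c', hc', rfl⟩, k, hk, rfl⟩ := hy
        rw [edist_lt_ofReal] at hylt
        have hdist : a + c - (b + c' + k) ∈ closedBall (0:X) ρ := by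
          rw [mem_closedBall_zero_iff, ← dist_eq_norm]
          exact hylt.le
        refine ⟨c', hc', (b + (a + c - (b + c' + k))) + k,
          ⟨b + (a + c - (b + c' + k)), Set.add_mem_add hb hdist, k, hk, rfl⟩, by abel⟩
      rw [excess]
      apply iSup₂_le
      rintro x ⟨a, ha, k, hk, rfl⟩
      obtain ⟨z, ⟨b, hb, u, hu, rfl⟩, k', hk', rfl⟩ := hA_sub ha
      have hbk : b + (k' + k) ∈ B + K :=
        Set.add_mem_add hb (hK_add (Set.add_mem_add hk' hk))
      have h1 : ENNReal.ofReal ρ = r + ε := by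
        rw [hρ, ENNReal.ofReal_add ENNReal.toReal_nonneg ε.coe_nonneg,
          ENNReal.ofReal_toReal hrtop.ne, ENNReal.ofReal_coe_nnreal]
      calc EMetric.infEdist (b + u + k' + k) (B + K)
          ≤ edist (b + u + k' + k) (b + (k' + k)) := EMetric.infEdist_le_edist_of_mem hbk
        _ = ENNReal.ofReal (dist (b + u + k' + k) (b + (k' + k))) := edist_dist _ _
        _ ≤ ENNReal.ofReal ρ := by
            apply ENNReal.ofReal_le_ofReal
            rw [dist_eq_norm]
            have : b + u + k' + k - (b + (k' + k)) = u := by abel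
            rw [this]
            exact mem_closedBall_zero_iff.mp hu
        _ = r + ε := h1
    exact le_antisymm hard easy
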